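/- Let M be a topological space and 𝒢 a topological group acting continuously on M with identity element e. If g ∈ 𝒢 lies in the same path component of 𝒢 as e, then the space P_g M is homotopy equivalent to P_e M, and hence to the free loop space LM of M. (Proposition 3.1, after Lupercio–Uribe–Xicoténcatl.) -/

import Mathlib

open Set AddCircle Topology

/-- `P_g M`: the space of continuous paths `σ : [0,1] → M` with `σ(1) = g • σ(0)`,
topologized as a subspace of `C([0,1], M)` with the compact-open topology.
For `g = 1` this is canonically homeomorphic to the free loop space `LM`. -/
abbrev PSp (𝒢 : Type) [Monoid 𝒢] [TopologicalSpace 𝒢] (M : Type) [TopologicalSpace M]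
    [MulAction 𝒢 M] (g : 𝒢) : Type :=
  {σ : C(unitInterval, M) // σ 1 = g • σ 0}

section Aux

variable (M : Type) [TopologicalSpace M] (𝒢 : Type) [Group 𝒢] [TopologicalSpace 𝒢]
    [IsTopologicalGroup 𝒢] [MulAction 𝒢 M] [ContinuousSMul 𝒢 M]

local instance : Fact ((0:ℝ) < 1) := ⟨one_pos⟩

/-- Twisting by a path from `1` to `g` gives a homeomorphism `P_g M ≃ₜ P_1 M`. -/
noncomputable def homeoPSp (g : 𝒢) (γ : Path (1:𝒢) g) : PSp 𝒢 M g ≃ₜ PSp 𝒢 M 1 where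
  toFun σ := ⟨⟨fun t => (γ t)⁻¹ • σ.1 t,
      ((γ.continuous.inv).smul (map_continuous σ.1))⟩, by
    simp [γ.source, γ.target, σ.2, inv_smul_smul]⟩
  invFun τ := ⟨⟨fun t => γ t • τ.1 t, (γ.continuous.smul (map_continuous τ.1))⟩, by
    simpa [γ.source, γ.target] using congrArg (g • ·) τ.2⟩
  left_inv σ := Subtype.ext (ContinuousMap.ext fun t => by simp)
  right_inv τ := Subtype.ext (ContinuousMap.ext fun t => by simp)
  continuous_toFun := by
    apply Continuous.subtype_mk
    apply ContinuousMap.continuous_of_continuous_uncurry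
    exact ((γ.continuous.comp continuous_snd).inv).smul
      (continuous_eval.comp (continuous_subtype_val.prodMap continuous_id))
  continuous_invFun := by
    apply Continuous.subtype_mk
    apply ContinuousMap.continuous_of_continuous_uncurry
    exact (γ.continuous.comp continuous_snd).smul
      (continuous_eval.comp (continuous_subtype_val.prodMap continuous_id))

/-- The quotient map `[0,1] → ℝ/ℤ`. -/
noncomputable def qc : C(unitInterval, AddCircle (1:ℝ)) :=
  ⟨fun t => ((t : ℝ) : AddCircle (1:ℝ)),
    (AddCircle.continuous_mk' (1:ℝ)).comp continuous_subtype_val⟩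

/-- The evaluation map `P_1 M × ℝ/ℤ → M`. -/
noncomputable def Ev (p : PSp 𝒢 M 1 × AddCircle (1:ℝ)) : M :=
  AddCircle.liftIco 1 0 (fun r => p.1.1 (Set.projIcc 0 1 zero_le_one r)) p.2

lemma Ev_coe (σ : PSp 𝒢 M 1) (t : unitInterval) : Ev M 𝒢 (σ, qc t) = σ.1 t := by
  rcases eq_or_lt_of_le t.2.2 with h1 | h1
  · have hco : qc t = ((0:ℝ) : AddCircle (1:ℝ)) := by
      show ((t : ℝ) : AddCircle (1:ℝ)) = _
      rw [h1]
      simpa using (AddCircle.coe_period (p := (1:ℝ)))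
    have hx : (0:ℝ) ∈ Ico (0:ℝ) 1 := ⟨le_refl 0, one_pos⟩
    have h0 : Set.projIcc (0:ℝ) 1 zero_le_one 0 = (0 : unitInterval) := by
      simp [Set.projIcc_of_mem]
    have ht : t = 1 := Subtype.ext h1
    calc Ev M 𝒢 (σ, qc t) = Ev M 𝒢 (σ, ((0:ℝ) : AddCircle (1:ℝ))) := by rw [hco]
      _ = σ.1 (Set.projIcc (0:ℝ) 1 zero_le_one 0) :=
          AddCircle.liftIco_zero_coe_apply
            (f := fun r => σ.1 (Set.projIcc 0 1 zero_le_one r)) (p := (1:ℝ)) hx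
      _ = σ.1 0 := by rw [h0]
      _ = σ.1 1 := by simpa using σ.2.symm
      _ = σ.1 t := by rw [ht]
  · have hx : (t : ℝ) ∈ Ico (0:ℝ) 1 := ⟨t.2.1, h1⟩
    calc Ev M 𝒢 (σ, qc t) = σ.1 (Set.projIcc (0:ℝ) 1 zero_le_one (t:ℝ)) :=
          AddCircle.liftIco_zero_coe_apply
            (f := fun r => σ.1 (Set.projIcc 0 1 zero_le_one r)) (p := (1:ℝ)) hx
      _ = σ.1 t := by rw [Set.projIcc_val zero_le_one t]

lemma qc_surjective : Function.Surjective ⇑qc := fun x => by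
  refine ⟨⟨((AddCircle.equivIco 1 0 x : Ico (0:ℝ) (0+1)) : ℝ),
    ⟨(AddCircle.equivIco 1 0 x).2.1, le_of_lt (by
      simpa using (AddCircle.equivIco 1 0 x).2.2)⟩⟩, ?_⟩
  show ((((AddCircle.equivIco 1 0 x : Ico (0:ℝ) (0+1)) : ℝ)) : AddCircle (1:ℝ)) = x
  exact (AddCircle.equivIco 1 0).symm_apply_apply x

lemma Ev_continuous : Continuous (Ev M 𝒢) := by
  have hq0 : IsProperMap ⇑qc :=
    (map_continuous qc).isProperMap
  have hQp : IsProperMap (Prod.map (id : PSp 𝒢 M 1 → PSp 𝒢 M 1) ⇑qc) :=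
    IsProperMap.prodMap isProperMap_id hq0
  have hQ : IsQuotientMap (Prod.map (id : PSp 𝒢 M 1 → PSp 𝒢 M 1) ⇑qc) :=
    hQp.isClosedMap.isQuotientMap (continuous_id.prodMap (map_continuous qc))
      (Function.Surjective.prodMap Function.surjective_id qc_surjective)
  rw [hQ.continuous_iff]
  have : (Ev M 𝒢) ∘ (Prod.map (id : PSp 𝒢 M 1 → PSp 𝒢 M 1) ⇑qc)
      = fun p : PSp 𝒢 M 1 × unitInterval => p.1.1 p.2 := by
    funext p
    exact Ev_coe M 𝒢 p.1 p.2
  rw [this]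
  exact continuous_eval.comp (continuous_subtype_val.prodMap continuous_id)

lemma mem_aux (f : C(AddCircle (1:ℝ), M)) :
    (f.comp qc) 1 = (1:𝒢) • (f.comp qc) 0 := by
  show f (((1 : unitInterval) : ℝ) : AddCircle (1:ℝ))
    = (1:𝒢) • f (((0 : unitInterval) : ℝ) : AddCircle (1:ℝ))
  rw [one_smul]
  congr 1
  simpa using (AddCircle.coe_period (p := (1:ℝ)))

/-- `P_1 M` is homeomorphic to `C(ℝ/ℤ, M)`. -/
noncomputable def homeoLoop : PSp 𝒢 M 1 ≃ₜ C(AddCircle (1:ℝ), M) where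
  toFun σ := ContinuousMap.mk (fun x => Ev M 𝒢 (σ, x))
    ((Ev_continuous M 𝒢).comp (continuous_const.prodMk continuous_id))
  invFun f := ⟨f.comp qc, mem_aux M 𝒢 f⟩
  left_inv σ := Subtype.ext (ContinuousMap.ext fun t => Ev_coe M 𝒢 σ t)
  right_inv f := by
    ext x
    obtain ⟨t, ht⟩ := qc_surjective x
    rw [← ht]
    exact Ev_coe M 𝒢 ⟨f.comp qc, mem_aux M 𝒢 f⟩ t
  continuous_toFun := by
    apply ContinuousMap.continuous_of_continuous_uncurry
    exact Ev_continuous M 𝒢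
  continuous_invFun := Continuous.subtype_mk (ContinuousMap.continuous_precomp qc) _

end Aux

/-- Proposition 3.1, after Lupercio–Uribe–Xicoténcatl.
Let `M` be a topological space and `𝒢` a topological group acting continuously on `M`.
If `g ∈ 𝒢` lies in the same path component of `𝒢` as the identity `e = 1`, then `P_g M`
is homotopy equivalent to `P_e M`, and hence to the free loop space
`LM = Map(S¹, M)` of `M`. -/
theorem stmt0 (M : Type) [TopologicalSpace M] (𝒢 : Type) [Group 𝒢] [TopologicalSpace 𝒢]
    [IsTopologicalGroup 𝒢] [MulAction 𝒢 M] [ContinuousSMul 𝒢 M]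
    (g : 𝒢) (hg : Joined (1 : 𝒢) g) :
    Nonempty (ContinuousMap.HomotopyEquiv (PSp 𝒢 M g) (PSp 𝒢 M 1)) ∧
    Nonempty (ContinuousMap.HomotopyEquiv (PSp 𝒢 M g) C(Circle, M)) := by
  obtain ⟨γ⟩ := hg
  have h1 : PSp 𝒢 M g ≃ₜ PSp 𝒢 M 1 := homeoPSp M 𝒢 g γ
  have h2 : PSp 𝒢 M 1 ≃ₜ C(AddCircle (1:ℝ), M) := homeoLoop M 𝒢
  have h3 : C(AddCircle (1:ℝ), M) ≃ₜ C(Circle, M) :=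
    (AddCircle.homeomorphCircle one_ne_zero).arrowCongr (Homeomorph.refl M)
  exact ⟨⟨h1.toHomotopyEquiv⟩, ⟨((h1.trans h2).trans h3).toHomotopyEquiv⟩⟩
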